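/- Let v > 0, r > 0, f ≥ 0 be real numbers with Δ ≥ (1+r)·√(1+f). Define the per-unit arbitrage loss Loss(δ) = 0 for δ ≤ f; Loss(δ) = ((1+r)/r)·((1+f) + (1+δ) − 2·√((1+δ)·(1+f))) for f < δ ≤ (1+f)·(1+r)² − 1; and Loss(δ) = (1+δ) − (1+f)·(1+r) for δ > (1+f)·(1+r)² − 1. Then v·∫₀^{Δ²−1} Loss(δ)·(1/(2Δ·√(1+δ))) dδ = 𝓐(f), where 𝓐(f) = v·((Δ − √(1+f)·(1+r))·(Δ² + Δ·√(1+f)·(1+r) + (1+f)·(r−2)·(r+1)) + (1+f)^{3/2}·r²·(r+1))/(3Δ). -/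

import Mathlib

/-- Expected adverse selection cost: integrating the per-unit arbitrage loss against the
shock density `φ(δ) = 1/(2Δ·√(1+δ))` on `[0, Δ²−1]` and multiplying by `v` yields
`𝓐(f) = v·((Δ − √(1+f)·(1+r))·(Δ² + Δ·√(1+f)·(1+r) + (1+f)·(r−2)·(r+1)) + (1+f)^{3/2}·r²·(r+1))/(3Δ)`. -/
theorem expected_adverse_selection
    (v r f Δ : ℝ) (hv : 0 < v) (hr : 0 < r) (hf : 0 ≤ f)
    (hΔ : (1 + r) * Real.sqrt (1 + f) ≤ Δ) :
    v * ∫ δ in (0 : ℝ)..(Δ ^ 2 - 1),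
        (if δ ≤ f then 0
          else if δ ≤ (1 + f) * (1 + r) ^ 2 - 1 then
            (1 + r) / r * ((1 + f) + (1 + δ) - 2 * Real.sqrt ((1 + δ) * (1 + f)))
          else (1 + δ) - (1 + f) * (1 + r)) * (1 / (2 * Δ * Real.sqrt (1 + δ))) =
      v * ((Δ - Real.sqrt (1 + f) * (1 + r)) *
            (Δ ^ 2 + Δ * Real.sqrt (1 + f) * (1 + r) + (1 + f) * (r - 2) * (r + 1)) +
          (1 + f) ^ ((3 : ℝ) / 2) * r ^ 2 * (r + 1)) / (3 * Δ) := by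
  have hf1 : (0:ℝ) ≤ 1 + f := by linarith
  set S := Real.sqrt (1 + f) with hSdef
  have hS2 : S ^ 2 = 1 + f := Real.sq_sqrt hf1
  have hS1 : 1 ≤ S := by
    rw [show (1:ℝ) = Real.sqrt 1 by simp, hSdef]
    exact Real.sqrt_le_sqrt (by linarith)
  have hΔpos : 0 < Δ := lt_of_lt_of_le (by nlinarith) hΔ
  have hrne : r ≠ 0 := hr.ne'
  have hΔne : Δ ≠ 0 := hΔpos.ne'
  set b := (1 + f) * (1 + r) ^ 2 - 1 with hbdef
  have hfb : f < b := by
    rw [hbdef]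
    nlinarith [mul_pos (show (0:ℝ) < 1 + f by linarith) (show (0:ℝ) < (1+r)^2 - 1 by nlinarith)]
  have hbΔ : b ≤ Δ ^ 2 - 1 := by
    rw [hbdef]
    nlinarith [mul_le_mul hΔ hΔ (by nlinarith : (0:ℝ) ≤ (1+r)*S) hΔpos.le, hS2]
  set I : ℝ → ℝ := fun δ =>
    (if δ ≤ f then 0
      else if δ ≤ b then
        (1 + r) / r * ((1 + f) + (1 + δ) - 2 * Real.sqrt ((1 + δ) * (1 + f)))
      else (1 + δ) - (1 + f) * (1 + r)) * (1 / (2 * Δ * Real.sqrt (1 + δ))) with hIdef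
  set M : ℝ → ℝ := fun δ =>
    (1 + r) / r * ((1 + f) + (1 + δ) - 2 * Real.sqrt ((1 + δ) * (1 + f))) *
      (1 / (2 * Δ * Real.sqrt (1 + δ))) with hMdef
  set T : ℝ → ℝ := fun δ =>
    ((1 + δ) - (1 + f) * (1 + r)) * (1 / (2 * Δ * Real.sqrt (1 + δ))) with hTdef
  -- derivative of sqrt (1+x)
  have husqrt : ∀ δ : ℝ, 0 ≤ δ →
      HasDerivAt (fun x => Real.sqrt (1 + x)) (1 / (2 * Real.sqrt (1 + δ))) δ := by
    intro δ hδ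
    have h := (Real.hasDerivAt_sqrt (show (1:ℝ) + δ ≠ 0 by positivity)).comp δ
      ((hasDerivAt_id δ).const_add 1)
    exact h.congr_deriv (by simp)
  -- EqOn facts
  have hEq0 : Set.EqOn I (fun _ => (0:ℝ)) (Set.uIcc 0 f) := by
    intro δ hδ
    rw [Set.uIcc_of_le hf] at hδ
    simp [hIdef, if_pos hδ.2]
  have hEqM : Set.EqOn I M (Set.uIcc f b) := by
    intro δ hδ
    rw [Set.uIcc_of_le hfb.le] at hδ
    by_cases h : δ ≤ f
    · have hδf : δ = f := le_antisymm h hδ.1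
      subst hδf
      simp only [hIdef, hMdef, if_pos le_rfl, Real.sqrt_mul_self hf1]
      ring
    · simp only [hIdef, hMdef, if_neg h, if_pos hδ.2]
  have hEqT : Set.EqOn I T (Set.uIcc b (Δ ^ 2 - 1)) := by
    intro δ hδ
    rw [Set.uIcc_of_le hbΔ] at hδ
    have hδf : ¬ δ ≤ f := by linarith [hδ.1]
    by_cases h : δ ≤ b
    · have hδb : δ = b := le_antisymm h hδ.1
      subst hδb
      simp only [hIdef, hTdef, if_neg hδf, if_pos le_rfl]
      have hsqb : Real.sqrt ((1 + b) * (1 + f)) = (1 + f) * (1 + r) := by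
        rw [show (1 + b) * (1 + f) = ((1 + f) * (1 + r)) ^ 2 by rw [hbdef]; ring]
        exact Real.sqrt_sq (by positivity)
      rw [hsqb, hbdef]
      have : (1 + r) / r * ((1 + f) + (1 + ((1 + f) * (1 + r) ^ 2 - 1))
          - 2 * ((1 + f) * (1 + r)))
          = (1 + ((1 + f) * (1 + r) ^ 2 - 1)) - (1 + f) * (1 + r) := by
        field_simp
        ring
      rw [this]
    · simp only [hIdef, hTdef, if_neg hδf, if_neg h]
  -- continuity
  have hsqrtc : Continuous fun x : ℝ => Real.sqrt (1 + x) :=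
    Real.continuous_sqrt.comp (continuous_const.add continuous_id)
  have hdenc : ∀ a c : ℝ, 0 ≤ a →
      ContinuousOn (fun δ : ℝ => 1 / (2 * Δ * Real.sqrt (1 + δ))) (Set.Icc a c) := by
    intro a c ha
    apply ContinuousOn.div continuousOn_const
      ((continuous_const.mul hsqrtc).continuousOn)
    intro x hx
    have : 0 < Real.sqrt (1 + x) := Real.sqrt_pos.2 (by linarith [hx.1])
    exact mul_ne_zero (mul_ne_zero two_ne_zero hΔne) this.ne'
  have hcM : ContinuousOn M (Set.uIcc f b) := by
    rw [Set.uIcc_of_le hfb.le, hMdef]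
    apply ContinuousOn.mul _ (hdenc f b hf)
    apply ContinuousOn.mul continuousOn_const
    exact (((continuous_const.add (continuous_const.add continuous_id)).sub
      (continuous_const.mul (Real.continuous_sqrt.comp
        ((continuous_const.add continuous_id).mul continuous_const)))).continuousOn)
  have hcT : ContinuousOn T (Set.uIcc b (Δ ^ 2 - 1)) := by
    rw [Set.uIcc_of_le hbΔ, hTdef]
    apply ContinuousOn.mul _ (hdenc b (Δ ^ 2 - 1) (by linarith))
    exact ((continuous_const.add continuous_id).sub continuous_const).continuousOn
  -- integrability of I on the pieces
  have hint0 : IntervalIntegrable I MeasureTheory.volume 0 f :=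
    (continuousOn_const.congr hEq0).intervalIntegrable
  have hintM : IntervalIntegrable I MeasureTheory.volume f b :=
    (hcM.congr hEqM).intervalIntegrable
  have hintT : IntervalIntegrable I MeasureTheory.volume b (Δ ^ 2 - 1) :=
    (hcT.congr hEqT).intervalIntegrable
  -- split the integral
  have hsplit : ∫ δ in (0:ℝ)..(Δ ^ 2 - 1), I δ
      = (∫ δ in (0:ℝ)..f, I δ) + ((∫ δ in f..b, I δ) + ∫ δ in b..(Δ ^ 2 - 1), I δ) := by
    rw [intervalIntegral.integral_add_adjacent_intervals hintM hintT,
      intervalIntegral.integral_add_adjacent_intervals hint0 (hintM.trans hintT)]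
  -- derivatives
  have hderivM : ∀ δ ∈ Set.uIcc f b,
      HasDerivAt (fun x => (1 + r) / (3 * r * Δ) * (Real.sqrt (1 + x) - S) ^ 3) (M δ) δ := by
    intro δ hδ
    rw [Set.uIcc_of_le hfb.le] at hδ
    have hδ0 : 0 ≤ δ := le_trans hf hδ.1
    have hupos : 0 < Real.sqrt (1 + δ) := Real.sqrt_pos.2 (by linarith)
    have h := (((husqrt δ hδ0).sub_const S).pow 3).const_mul ((1 + r) / (3 * r * Δ))
    refine h.congr_deriv (Eq.symm ?_)
    rw [hMdef]
    simp only
    rw [Real.sqrt_mul (by linarith : (0:ℝ) ≤ 1 + δ), ← hSdef]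
    set u := Real.sqrt (1 + δ) with hudef
    have hu2 : u ^ 2 = 1 + δ := Real.sq_sqrt (by linarith)
    rw [← hu2, ← hS2]
    field_simp
    ring
  have hderivT : ∀ δ ∈ Set.uIcc b (Δ ^ 2 - 1),
      HasDerivAt (fun x => (Real.sqrt (1 + x) ^ 3 / 3 - (1 + f) * (1 + r) * Real.sqrt (1 + x)) / Δ)
        (T δ) δ := by
    intro δ hδ
    rw [Set.uIcc_of_le hbΔ] at hδ
    have hδ0 : 0 ≤ δ := le_trans (le_trans hf hfb.le) hδ.1
    have hupos : 0 < Real.sqrt (1 + δ) := Real.sqrt_pos.2 (by linarith)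
    have h := ((((husqrt δ hδ0).pow 3).div_const 3).sub
      ((husqrt δ hδ0).const_mul ((1 + f) * (1 + r)))).div_const Δ
    refine h.congr_deriv (Eq.symm ?_)
    rw [hTdef]
    simp only
    set u := Real.sqrt (1 + δ) with hudef
    have hu2 : u ^ 2 = 1 + δ := Real.sq_sqrt (by linarith)
    rw [← hu2]
    field_simp
    ring
  -- evaluate the two nonzero integrals
  have hIM : ∫ δ in f..b, I δ
      = (1 + r) / (3 * r * Δ) * (Real.sqrt (1 + b) - S) ^ 3
        - (1 + r) / (3 * r * Δ) * (Real.sqrt (1 + f) - S) ^ 3 := by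
    rw [intervalIntegral.integral_congr hEqM]
    exact intervalIntegral.integral_eq_sub_of_hasDerivAt hderivM hcM.intervalIntegrable
  have hIT : ∫ δ in b..(Δ ^ 2 - 1), I δ
      = (Real.sqrt (1 + (Δ ^ 2 - 1)) ^ 3 / 3
          - (1 + f) * (1 + r) * Real.sqrt (1 + (Δ ^ 2 - 1))) / Δ
        - (Real.sqrt (1 + b) ^ 3 / 3 - (1 + f) * (1 + r) * Real.sqrt (1 + b)) / Δ := by
    rw [intervalIntegral.integral_congr hEqT]
    exact intervalIntegral.integral_eq_sub_of_hasDerivAt hderivT hcT.intervalIntegrable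
  have hI0 : ∫ δ in (0:ℝ)..f, I δ = 0 := by
    rw [intervalIntegral.integral_congr hEq0]
    simp
  -- sqrt values
  have hsb : Real.sqrt (1 + b) = S * (1 + r) := by
    rw [show (1:ℝ) + b = (S * (1 + r)) ^ 2 by rw [hbdef, mul_pow, hS2]; ring]
    exact Real.sqrt_sq (by nlinarith)
  have hsD : Real.sqrt (1 + (Δ ^ 2 - 1)) = Δ := by
    rw [show (1:ℝ) + (Δ ^ 2 - 1) = Δ ^ 2 by ring]
    exact Real.sqrt_sq hΔpos.le
  have hsf : Real.sqrt (1 + f) = S := hSdef.symm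
  have hrpow : (1 + f) ^ ((3:ℝ) / 2) = S ^ 3 := by
    rw [hSdef, Real.sqrt_eq_rpow, ← Real.rpow_natCast ((1 + f) ^ ((1:ℝ) / 2)) 3,
      ← Real.rpow_mul hf1]
    norm_num
  rw [hsplit, hI0, hIM, hIT, hsb, hsD, hsf, hrpow, ← hS2]
  field_simp
  ring
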